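/- Let A1 be anti-stable (all eigenvalues λ satisfy |λ| ≥ 1) and A2 stable (all eigenvalues in the open unit disk). If T solves T·A1 − A2·T = A3, then for every solution of the discrete-time system x1(t+1) = A1·x1(t), x2(t+1) = A2·x2(t) + A3·x1(t), the difference x2(t) − T·x1(t) tends to 0 as t → ∞. -/

import Mathlib

open Matrix Filter

attribute [local instance] Matrix.linftyOpNormedRing Matrix.linftyOpNormedAlgebra

lemma pow_norm_tendsto_zero {n : ℕ} [NeZero n] (B : Matrix (Fin n) (Fin n) ℂ)
    (hB : ∀ μ ∈ spectrum ℂ B, ‖μ‖ < 1) :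
    Tendsto (fun t => ‖B ^ t‖) atTop (nhds 0) := by
  have hrad : spectralRadius ℂ B < 1 := by
    have := spectrum.spectralRadius_lt_of_forall_lt (a := B)
      (r := 1) (fun z hz => by simpa [← NNReal.coe_lt_coe, coe_nnnorm] using hB z hz)
    simpa using this
  obtain ⟨c, hc1, hc2⟩ := exists_between hrad
  have hgel := spectrum.pow_nnnorm_pow_one_div_tendsto_nhds_spectralRadius (a := B)
  have hev : ∀ᶠ t : ℕ in atTop, (‖B ^ t‖₊ : ENNReal) ^ ((1 : ℝ) / (t : ℝ)) < c :=
    hgel.eventually_lt_const hc1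
  have hcne : c ≠ ⊤ := (hc2.trans (by norm_num)).ne
  have hctoReal : c.toReal < 1 := by
    have := (ENNReal.toReal_lt_toReal hcne (by norm_num : (1 : ENNReal) ≠ ⊤)).mpr hc2
    simpa using this
  have key : ∀ᶠ t in atTop, ‖B ^ t‖ ≤ c.toReal ^ t := by
    filter_upwards [hev, eventually_ge_atTop 1] with t ht ht1
    have htpos : (0 : ℝ) < t := by exact_mod_cast ht1
    have h1 : (‖B ^ t‖₊ : ENNReal) < c ^ t := by
      have h2 := ENNReal.rpow_lt_rpow ht htpos
      rwa [← ENNReal.rpow_mul, one_div, inv_mul_cancel₀ htpos.ne', ENNReal.rpow_one,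
        ENNReal.rpow_natCast] at h2
    have h3 : (‖B ^ t‖₊ : ℝ) ≤ (c ^ t).toReal := by
      refine ENNReal.toReal_mono (by simp [ENNReal.pow_ne_top hcne]) h1.le |>.trans_eq ?_
      · simp
    calc ‖B ^ t‖ = (‖B ^ t‖₊ : ℝ) := by simp
    _ ≤ (c ^ t).toReal := h3
    _ = c.toReal ^ t := by simp [ENNReal.toReal_pow]
  have hgeo : Tendsto (fun t : ℕ => c.toReal ^ t) atTop (nhds 0) :=
    tendsto_pow_atTop_nhds_zero_of_lt_one ENNReal.toReal_nonneg hctoReal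
  exact squeeze_zero' (Eventually.of_forall (fun t => norm_nonneg _)) key hgeo

lemma linfty_entry_le {n : ℕ} (M : Matrix (Fin n) (Fin n) ℂ) (i j : Fin n) :
    ‖M i j‖ ≤ ‖M‖ := by
  rw [← coe_nnnorm, ← coe_nnnorm, NNReal.coe_le_coe, Matrix.linfty_opNNNorm_def]
  calc ‖M i j‖₊ ≤ ∑ k, ‖M i k‖₊ :=
        Finset.single_le_sum (f := fun k => ‖M i k‖₊) (fun k _ => zero_le) (Finset.mem_univ j)
  _ ≤ _ := Finset.le_sup (f := fun i => ∑ k, ‖M i k‖₊) (Finset.mem_univ i)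

def IsStable {n : Type*} [Fintype n] [DecidableEq n] (M : Matrix n n ℝ) : Prop :=
  ∀ μ ∈ spectrum ℂ (M.map (algebraMap ℝ ℂ)), ‖μ‖ < 1

def IsAntiStable {n : Type*} [Fintype n] [DecidableEq n] (M : Matrix n n ℝ) : Prop :=
  ∀ μ ∈ spectrum ℂ (M.map (algebraMap ℝ ℂ)), 1 ≤ ‖μ‖

set_option maxHeartbeats 1600000 in
theorem stmt1 {n1 n2 : ℕ}
    (A1 : Matrix (Fin n1) (Fin n1) ℝ) (A2 : Matrix (Fin n2) (Fin n2) ℝ)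
    (A3 : Matrix (Fin n2) (Fin n1) ℝ) (T : Matrix (Fin n2) (Fin n1) ℝ)
    (hA1 : IsAntiStable A1) (hA2 : IsStable A2)
    (hT : T * A1 - A2 * T = A3)
    (x1 : ℕ → Fin n1 → ℝ) (x2 : ℕ → Fin n2 → ℝ)
    (hx1 : ∀ t, x1 (t + 1) = A1.mulVec (x1 t))
    (hx2 : ∀ t, x2 (t + 1) = A2.mulVec (x2 t) + A3.mulVec (x1 t)) :
    Tendsto (fun t => x2 t - T.mulVec (x1 t)) atTop (nhds 0) := by
  rcases Nat.eq_zero_or_pos n2 with h0 | hpos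
  · subst h0
    have : (fun t => x2 t - T.mulVec (x1 t)) = fun _ => 0 := by
      funext t; exact Subsingleton.elim _ _
    rw [this]; exact tendsto_const_nhds
  haveI : NeZero n2 := ⟨hpos.ne'⟩
  set e : ℕ → Fin n2 → ℝ := fun t => x2 t - T.mulVec (x1 t) with he_def
  have he : ∀ t, e (t + 1) = A2.mulVec (e t) := by
    intro t
    simp only [he_def, hx2 t, hx1 t, Matrix.mulVec_mulVec, Matrix.mulVec_sub, ← hT,
      Matrix.sub_mulVec]
    abel
  have hpow : ∀ t, e t = (A2 ^ t).mulVec (e 0) := by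
    intro t
    induction t with
    | zero => simp [Matrix.mulVec_one]
    | succ t ih => rw [he t, ih, Matrix.mulVec_mulVec, pow_succ']
  set B := A2.map (algebraMap ℝ ℂ) with hB_def
  have hBpow : ∀ t, B ^ t = (A2 ^ t).map (algebraMap ℝ ℂ) := by
    intro t
    simpa [hB_def] using (map_pow ((algebraMap ℝ ℂ).mapMatrix) A2 t).symm
  have hBt : Tendsto (fun t => ‖B ^ t‖) atTop (nhds 0) := pow_norm_tendsto_zero B hA2
  rw [tendsto_pi_nhds]
  intro i
  have hbound : ∀ t, |e t i| ≤ ‖B ^ t‖ * ∑ j, |e 0 j| := by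
    intro t
    rw [hpow t]
    calc |Matrix.mulVec (A2 ^ t) (e 0) i| = |∑ j, (A2 ^ t) i j * e 0 j| := by
          rw [Matrix.mulVec, dotProduct]
    _ ≤ ∑ j, |(A2 ^ t) i j * e 0 j| := Finset.abs_sum_le_sum_abs _ _
    _ ≤ ∑ j, ‖B ^ t‖ * |e 0 j| := by
          refine Finset.sum_le_sum fun j _ => ?_
          rw [abs_mul]
          refine mul_le_mul_of_nonneg_right ?_ (abs_nonneg _)
          have h := linfty_entry_le (B ^ t) i j
          rw [hBpow t] at h ⊢
          simpa [Matrix.map_apply, Complex.coe_algebraMap, Complex.norm_real] using h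
    _ = ‖B ^ t‖ * ∑ j, |e 0 j| := by rw [Finset.mul_sum]
  have hlim : Tendsto (fun t => ‖B ^ t‖ * ∑ j, |e 0 j|) atTop (nhds 0) := by
    simpa using hBt.mul_const (∑ j, |e 0 j|)
  have : Tendsto (fun t => e t i) atTop (nhds 0) := by
    refine squeeze_zero_norm (fun t => ?_) hlim
    simpa [Real.norm_eq_abs] using hbound t
  simpa [he_def] using this
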